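/- Let $T \in (0,1]$, $k \geq 2$, and let $\bar K \colon \mathbb{R} \to \mathbb{R}$ be measurable and odd with $\int_0^{2T} \bar K(t)^2\,dt \leq A$ and $\int_0^{2T} |\bar K(t)|\,dt \leq B$. Then $\left| \int_{[0,T]^k} \bar K(s_1 - s_2)\bar K(s_2-s_3)\cdots \bar K(s_{k-1}-s_k)\bar K(s_k - s_1) \, ds_1 \cdots ds_k \right| \leq 2A \cdot T \cdot (2B)^{k-2}$. -/

import Mathlib

open MeasureTheory intervalIntegral
open scoped ENNReal

section CycleAux

lemma cycle_peel_zero {m : ℕ} (ν : Measure ℝ) [SigmaFinite ν]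
    (F : (Fin (m+1) → ℝ) → ℝ≥0∞) (hF : Measurable F) :
    ∫⁻ s, F s ∂(Measure.pi fun _ : Fin (m+1) => ν)
      = ∫⁻ x, ∫⁻ y, F (Fin.cons x y) ∂(Measure.pi fun _ : Fin m => ν) ∂ν := by
  have h := (measurePreserving_piFinSuccAbove (fun _ : Fin (m+1) => ν) 0).lintegral_comp_emb
    (MeasurableEquiv.measurableEmbedding _)
    (fun p : ℝ × (Fin m → ℝ) => F (Fin.insertNth 0 p.1 p.2))
  have key : ∀ a : Fin (m+1) → ℝ, Fin.insertNth 0 ((Fin.insertNthEquiv (fun _ => ℝ) 0).symm a).1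
      ((Fin.insertNthEquiv (fun _ => ℝ) 0).symm a).2 = a := fun a =>
    (Fin.insertNthEquiv (fun _ => ℝ) 0).apply_symm_apply a
  simp only [MeasurableEquiv.piFinSuccAbove_apply, key] at h
  rw [h]
  rw [lintegral_prod _ (by
    exact (hF.comp (MeasurableEquiv.piFinSuccAbove (fun _ : Fin (m+1) => ℝ) 0).symm.measurable).aemeasurable)]
  simp [Fin.insertNth_zero']

lemma cycle_peel_last {m : ℕ} (ν : Measure ℝ) [SigmaFinite ν]
    (F : (Fin (m+1) → ℝ) → ℝ≥0∞) (hF : Measurable F) :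
    ∫⁻ s, F s ∂(Measure.pi fun _ : Fin (m+1) => ν)
      = ∫⁻ x, ∫⁻ y, F (Fin.snoc y x) ∂(Measure.pi fun _ : Fin m => ν) ∂ν := by
  have h := (measurePreserving_piFinSuccAbove (fun _ : Fin (m+1) => ν) (Fin.last m)).lintegral_comp_emb
    (MeasurableEquiv.measurableEmbedding _)
    (fun p : ℝ × (Fin m → ℝ) => F (Fin.insertNth (Fin.last m) p.1 p.2))
  have key : ∀ a : Fin (m+1) → ℝ, Fin.insertNth (Fin.last m) ((Fin.insertNthEquiv (fun _ => ℝ) (Fin.last m)).symm a).1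
      ((Fin.insertNthEquiv (fun _ => ℝ) (Fin.last m)).symm a).2 = a := fun a =>
    (Fin.insertNthEquiv (fun _ => ℝ) (Fin.last m)).apply_symm_apply a
  simp only [MeasurableEquiv.piFinSuccAbove_apply, key] at h
  rw [h]
  rw [lintegral_prod _ (by
    exact (hF.comp (MeasurableEquiv.piFinSuccAbove (fun _ : Fin (m+1) => ℝ) (Fin.last m)).symm.measurable).aemeasurable)]
  simp [Fin.insertNth_last']

lemma cycle_chain_cons (L : ℝ → ℝ≥0∞) (hL : Measurable L) (ν : Measure ℝ) [SigmaFinite ν]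
    (β : ℝ≥0∞) (hβ : ∀ᵐ x ∂ν, ∫⁻ z, L (x - z) ∂ν ≤ β) :
    ∀ (m : ℕ) (g : ℝ → ℝ≥0∞), Measurable g →
      (∫⁻ s, g (s 0) * ∏ j : Fin m, L (s j.castSucc - s j.succ)
          ∂(Measure.pi fun _ : Fin (m+1) => ν))
        ≤ (∫⁻ x, g x ∂ν) * β ^ m := by
  intro m
  induction m with
  | zero =>
    intro g hg
    simp only [Finset.univ_eq_empty, Finset.prod_empty, mul_one, pow_zero]
    have := (measurePreserving_funUnique ν (Fin 1)).lintegral_comp_emb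
      (MeasurableEquiv.measurableEmbedding _) g
    rw [← this]
    rfl
  | succ m ih =>
    intro g hg
    have hmeas : Measurable fun s : Fin (m+2) → ℝ =>
        g (s 0) * ∏ j : Fin (m+1), L (s j.castSucc - s j.succ) := by
      refine (hg.comp (measurable_pi_apply 0)).mul ?_
      exact Finset.measurable_prod _ fun j _ =>
        hL.comp ((measurable_pi_apply _).sub (measurable_pi_apply _))
    rw [cycle_peel_zero ν _ hmeas]
    have hrw : ∀ (x : ℝ) (y : Fin (m+1) → ℝ),
        (g ((Fin.cons x y : Fin (m+2) → ℝ) 0) *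
          ∏ j : Fin (m+1), L ((Fin.cons x y : Fin (m+2) → ℝ) j.castSucc
            - (Fin.cons x y : Fin (m+2) → ℝ) j.succ))
        = g x * ((fun z => L (x - z)) (y 0) * ∏ j : Fin m, L (y j.castSucc - y j.succ)) := by
      intro x y
      simp only [Fin.prod_univ_succ, Fin.castSucc_zero, Fin.cons_zero, ← Fin.succ_castSucc,
        Fin.cons_succ]
    simp only [hrw]
    have hinner : ∀ x : ℝ,
        (∫⁻ y, L (x - y 0) * ∏ j : Fin m, L (y j.castSucc - y j.succ)
          ∂(Measure.pi fun _ : Fin (m+1) => ν))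
        ≤ (∫⁻ z, L (x - z) ∂ν) * β ^ m := fun x =>
      ih (fun z => L (x - z)) (hL.comp (measurable_const.sub measurable_id))
    have hmeas' : ∀ x : ℝ, Measurable fun y : Fin (m+1) → ℝ =>
        L (x - y 0) * ∏ j : Fin m, L (y j.castSucc - y j.succ) := fun x => by
      refine (hL.comp (measurable_const.sub (measurable_pi_apply 0))).mul ?_
      exact Finset.measurable_prod _ fun j _ =>
        hL.comp ((measurable_pi_apply _).sub (measurable_pi_apply _))
    calc ∫⁻ x, (∫⁻ y, g x * (L (x - y 0) *
            ∏ j : Fin m, L (y j.castSucc - y j.succ)) ∂(Measure.pi fun _ : Fin (m+1) => ν)) ∂ν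
        = ∫⁻ x, g x * (∫⁻ y, L (x - y 0) *
            ∏ j : Fin m, L (y j.castSucc - y j.succ) ∂(Measure.pi fun _ : Fin (m+1) => ν)) ∂ν :=
          lintegral_congr fun x => lintegral_const_mul _ (hmeas' x)
      _ ≤ ∫⁻ x, g x * (β * β ^ m) ∂ν := by
            refine lintegral_mono_ae ?_
            filter_upwards [hβ] with x hx
            exact mul_le_mul_right ((hinner x).trans (mul_le_mul_left hx _)) _
      _ = (∫⁻ x, g x ∂ν) * β ^ (m+1) := by
            rw [lintegral_mul_const _ hg, pow_succ]
            ring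

lemma cycle_chain_snoc (L : ℝ → ℝ≥0∞) (hL : Measurable L) (ν : Measure ℝ) [SigmaFinite ν]
    (β : ℝ≥0∞) (hβ : ∀ᵐ x ∂ν, ∫⁻ z, L (z - x) ∂ν ≤ β) :
    ∀ (m : ℕ) (g : ℝ → ℝ≥0∞), Measurable g →
      (∫⁻ s, (∏ j : Fin m, L (s j.castSucc - s j.succ)) * g (s (Fin.last m))
          ∂(Measure.pi fun _ : Fin (m+1) => ν))
        ≤ (∫⁻ x, g x ∂ν) * β ^ m := by
  intro m
  induction m with
  | zero =>
    intro g hg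
    simp only [Finset.univ_eq_empty, Finset.prod_empty, one_mul, pow_zero]
    have := (measurePreserving_funUnique ν (Fin 1)).lintegral_comp_emb
      (MeasurableEquiv.measurableEmbedding _) g
    rw [mul_one, ← this]
    rfl
  | succ m ih =>
    intro g hg
    have hmeas : Measurable fun s : Fin (m+2) → ℝ =>
        (∏ j : Fin (m+1), L (s j.castSucc - s j.succ)) * g (s (Fin.last (m+1))) := by
      refine Measurable.mul ?_ (hg.comp (measurable_pi_apply _))
      exact Finset.measurable_prod _ fun j _ =>
        hL.comp ((measurable_pi_apply _).sub (measurable_pi_apply _))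
    rw [cycle_peel_last ν _ hmeas]
    have hrw : ∀ (x : ℝ) (y : Fin (m+1) → ℝ),
        ((∏ j : Fin (m+1), L ((Fin.snoc y x : Fin (m+2) → ℝ) j.castSucc
            - (Fin.snoc y x : Fin (m+2) → ℝ) j.succ)) *
          g ((Fin.snoc y x : Fin (m+2) → ℝ) (Fin.last (m+1))))
        = g x * ((∏ j : Fin m, L (y j.castSucc - y j.succ)) * L (y (Fin.last m) - x)) := by
      intro x y
      simp only [Fin.prod_univ_castSucc, Fin.succ_castSucc, Fin.snoc_castSucc,
        Fin.succ_last, Fin.snoc_last]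
      ring
    simp only [hrw]
    have hinner : ∀ x : ℝ,
        (∫⁻ y, (∏ j : Fin m, L (y j.castSucc - y j.succ)) * L (y (Fin.last m) - x)
          ∂(Measure.pi fun _ : Fin (m+1) => ν))
        ≤ (∫⁻ z, L (z - x) ∂ν) * β ^ m := fun x =>
      ih (fun z => L (z - x)) (hL.comp (measurable_id.sub measurable_const))
    have hmeas' : ∀ x : ℝ, Measurable fun y : Fin (m+1) → ℝ =>
        (∏ j : Fin m, L (y j.castSucc - y j.succ)) * L (y (Fin.last m) - x) := fun x => by
      refine Measurable.mul ?_ (hL.comp ((measurable_pi_apply _).sub measurable_const))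
      exact Finset.measurable_prod _ fun j _ =>
        hL.comp ((measurable_pi_apply _).sub (measurable_pi_apply _))
    calc ∫⁻ x, (∫⁻ y, g x * ((∏ j : Fin m, L (y j.castSucc - y j.succ)) *
            L (y (Fin.last m) - x)) ∂(Measure.pi fun _ : Fin (m+1) => ν)) ∂ν
        = ∫⁻ x, g x * (∫⁻ y, (∏ j : Fin m, L (y j.castSucc - y j.succ)) *
            L (y (Fin.last m) - x) ∂(Measure.pi fun _ : Fin (m+1) => ν)) ∂ν :=
          lintegral_congr fun x => lintegral_const_mul _ (hmeas' x)
      _ ≤ ∫⁻ x, g x * (β * β ^ m) ∂ν := by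
            refine lintegral_mono_ae ?_
            filter_upwards [hβ] with x hx
            exact mul_le_mul_right ((hinner x).trans (mul_le_mul_left hx _)) _
      _ = (∫⁻ x, g x ∂ν) * β ^ (m+1) := by
            rw [lintegral_mul_const _ hg, pow_succ]
            ring

lemma cycle_slice_bound {T : ℝ} (hT : 0 < T) (f : ℝ → ℝ≥0∞)
    (heven : ∀ t, f (-t) = f t) (C : ℝ≥0∞)
    (hC : ∫⁻ t in Set.Icc 0 (2*T), f t ≤ C)
    {x : ℝ} (hx : x ∈ Set.Icc (0:ℝ) T) :
    ∫⁻ z in Set.Icc (0:ℝ) T, f (x - z) ≤ 2 * C := by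
  rw [Set.mem_Icc] at hx
  have hmp : MeasurePreserving (fun z : ℝ => x - z) volume volume := by
    have : (fun z : ℝ => x - z) = (fun z : ℝ => x + z) ∘ (fun z : ℝ => -z) := by
      funext z; simp [sub_eq_add_neg]
    rw [this]
    exact (measurePreserving_add_left volume x).comp (Measure.measurePreserving_neg volume)
  have hemb : MeasurableEmbedding (fun z : ℝ => x - z) := by
    have : (fun z : ℝ => x - z) = ⇑((MeasurableEquiv.neg ℝ).trans (MeasurableEquiv.addLeft x)) := by
      funext z; simp [sub_eq_add_neg]
    rw [this]; exact MeasurableEquiv.measurableEmbedding _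
  rw [hmp.setLIntegral_comp_emb hemb f _]
  have himg : (fun z : ℝ => x - z) '' Set.Icc 0 T = Set.Icc (x - T) (x - 0) :=
    Set.image_const_sub_Icc x 0 T
  rw [himg]
  have hsub : Set.Icc (x - T) (x - 0) ⊆ Set.Icc (-T) T := by
    apply Set.Icc_subset_Icc
    · linarith [hx.2]
    · linarith [hx.1]
  refine (lintegral_mono_set hsub).trans ?_
  have hsplit : Set.Icc (-T) T ⊆ Set.Icc (-T) 0 ∪ Set.Icc 0 T := by
    rw [Set.Icc_union_Icc_eq_Icc (by linarith) hT.le]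
  refine (lintegral_mono_set hsplit).trans ?_
  refine (lintegral_union_le _ _ _).trans ?_
  have hrefl : ∫⁻ u in Set.Icc (-T) 0, f u ≤ C := by
    have hmpn : MeasurePreserving (fun z : ℝ => -z) volume volume :=
      Measure.measurePreserving_neg volume
    have hembn : MeasurableEmbedding (fun z : ℝ => -z) :=
      (MeasurableEquiv.neg ℝ).measurableEmbedding
    have : ∫⁻ u in Set.Icc (0:ℝ) T, f (-u) = ∫⁻ u in (fun z : ℝ => -z) '' Set.Icc 0 T, f u :=
      hmpn.setLIntegral_comp_emb hembn f _
    simp only [heven] at this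
    have himgn : (fun z : ℝ => -z) '' Set.Icc (0:ℝ) T = Set.Icc (-T) (-0) := by
      rw [show (fun z : ℝ => -z) = Neg.neg from rfl, Set.image_neg_eq_neg, Set.neg_Icc]
    rw [himgn] at this
    rw [neg_zero] at this
    rw [← this]
    refine (lintegral_mono_set (Set.Icc_subset_Icc le_rfl (by linarith))).trans hC
  have h2 : ∫⁻ u in Set.Icc (0:ℝ) T, f u ≤ C :=
    (lintegral_mono_set (Set.Icc_subset_Icc le_rfl (by linarith))).trans hC
  calc (∫⁻ u in Set.Icc (-T) 0, f u) + ∫⁻ u in Set.Icc (0:ℝ) T, f u ≤ C + C :=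
        add_le_add hrefl h2
    _ = 2 * C := (two_mul C).symm

lemma cycle_pi_box (k : ℕ) (T : ℝ) :
    (volume : Measure (Fin k → ℝ)).restrict (Set.univ.pi fun _ => Set.Icc (0:ℝ) T)
      = Measure.pi (fun _ : Fin k => volume.restrict (Set.Icc (0:ℝ) T)) := by
  refine (Measure.pi_eq (μ := fun _ : Fin k => volume.restrict (Set.Icc (0:ℝ) T)) fun s hs => ?_).symm
  rw [Measure.restrict_apply (MeasurableSet.univ_pi hs)]
  rw [← Set.pi_inter_distrib]
  rw [MeasureTheory.volume_pi, Measure.pi_pi]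
  exact Finset.prod_congr rfl fun i _ =>
    (Measure.restrict_apply (hs i)).symm

end CycleAux

/-- The cycle estimate: for an odd kernel `K̄` with `∫₀^{2T} K̄² ≤ A` and
`∫₀^{2T} |K̄| ≤ B`, the cyclic integral of `k = n+2 ≥ 2` kernel factors over `[0,T]^k`
is bounded by `2·A·T·(2B)^{k-2}`. -/
theorem stmt9 (T A B : ℝ) (hT : 0 < T) (hT1 : T ≤ 1) (n : ℕ)
    (K : ℝ → ℝ) (hK : Measurable K) (hodd : ∀ t, K (-t) = -K t)
    (hA2 : IntervalIntegrable (fun t => K t ^ 2) volume 0 (2*T))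
    (hB1 : IntervalIntegrable (fun t => |K t|) volume 0 (2*T))
    (hA : (∫ t in (0:ℝ)..(2*T), K t ^ 2) ≤ A)
    (hB : (∫ t in (0:ℝ)..(2*T), |K t|) ≤ B) :
    |∫ s : Fin (n+2) → ℝ in Set.univ.pi (fun _ => Set.Icc (0:ℝ) T),
        ∏ i : Fin (n+2), K (s i - s (i + 1))|
      ≤ 2 * A * T * (2 * B) ^ n := by
  have h2T : (0:ℝ) ≤ 2 * T := by linarith
  have hA0 : 0 ≤ A := le_trans (intervalIntegral.integral_nonneg h2T fun u _ => sq_nonneg _) hA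
  have hB0 : 0 ≤ B := le_trans (intervalIntegral.integral_nonneg h2T fun u _ => abs_nonneg _) hB
  have hKevenSq : ∀ t : ℝ, K (-t) ^ 2 = K t ^ 2 := fun t => by rw [hodd]; ring
  have hKevenAbs : ∀ t : ℝ, |K (-t)| = |K t| := fun t => by rw [hodd, abs_neg]
  have hLmeas : Measurable fun t : ℝ => ENNReal.ofReal |K t| :=
    ENNReal.measurable_ofReal.comp hK.abs
  have hQmeas : Measurable fun t : ℝ => ENNReal.ofReal (K t ^ 2) :=
    ENNReal.measurable_ofReal.comp (hK.pow_const 2)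
  -- base lintegral bounds on [0, 2T]
  have hQ_base : (∫⁻ t in Set.Icc 0 (2*T), ENNReal.ofReal (K t ^ 2)) ≤ ENNReal.ofReal A := by
    have hint : IntegrableOn (fun t => K t ^ 2) (Set.Icc 0 (2*T)) := by
      rw [integrableOn_Icc_iff_integrableOn_Ioc]
      exact (intervalIntegrable_iff_integrableOn_Ioc_of_le h2T).1 hA2
    rw [← MeasureTheory.ofReal_integral_eq_lintegral_ofReal hint
      (Filter.Eventually.of_forall fun t => sq_nonneg _)]
    apply ENNReal.ofReal_le_ofReal
    rwa [MeasureTheory.integral_Icc_eq_integral_Ioc, ← intervalIntegral.integral_of_le h2T]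
  have hL_base : (∫⁻ t in Set.Icc 0 (2*T), ENNReal.ofReal |K t|) ≤ ENNReal.ofReal B := by
    have hint : IntegrableOn (fun t => |K t|) (Set.Icc 0 (2*T)) := by
      rw [integrableOn_Icc_iff_integrableOn_Ioc]
      exact (intervalIntegrable_iff_integrableOn_Ioc_of_le h2T).1 hB1
    rw [← MeasureTheory.ofReal_integral_eq_lintegral_ofReal hint
      (Filter.Eventually.of_forall fun t => abs_nonneg _)]
    apply ENNReal.ofReal_le_ofReal
    rwa [MeasureTheory.integral_Icc_eq_integral_Ioc, ← intervalIntegral.integral_of_le h2T]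
  -- slice bounds
  have hQ_slice : ∀ x ∈ Set.Icc (0:ℝ) T,
      (∫⁻ z, ENNReal.ofReal (K (x - z) ^ 2) ∂(volume.restrict (Set.Icc (0:ℝ) T)))
        ≤ 2 * ENNReal.ofReal A := fun x hx =>
    cycle_slice_bound hT (fun t => ENNReal.ofReal (K t ^ 2))
      (fun t => by rw [hKevenSq t]) _ hQ_base hx
  have hL_slice : ∀ x ∈ Set.Icc (0:ℝ) T,
      (∫⁻ z, ENNReal.ofReal |K (x - z)| ∂(volume.restrict (Set.Icc (0:ℝ) T)))
        ≤ 2 * ENNReal.ofReal B := fun x hx =>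
    cycle_slice_bound hT (fun t => ENNReal.ofReal |K t|)
      (fun t => by rw [hKevenAbs t]) _ hL_base hx
  have hβcons : ∀ᵐ x ∂(volume.restrict (Set.Icc (0:ℝ) T)),
      (∫⁻ z, ENNReal.ofReal |K (x - z)| ∂(volume.restrict (Set.Icc (0:ℝ) T)))
        ≤ 2 * ENNReal.ofReal B := by
    filter_upwards [ae_restrict_mem measurableSet_Icc] with x hx
    exact hL_slice x hx
  have hzx : ∀ x z : ℝ, |K (z - x)| = |K (x - z)| := fun x z => by
    rw [show z - x = -(x - z) by ring, hKevenAbs]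
  have hzxQ : ∀ x z : ℝ, K (z - x) ^ 2 = K (x - z) ^ 2 := fun x z => by
    rw [show z - x = -(x - z) by ring, hKevenSq]
  have hβsnoc : ∀ᵐ x ∂(volume.restrict (Set.Icc (0:ℝ) T)),
      (∫⁻ z, ENNReal.ofReal |K (z - x)| ∂(volume.restrict (Set.Icc (0:ℝ) T)))
        ≤ 2 * ENNReal.ofReal B := by
    filter_upwards [ae_restrict_mem measurableSet_Icc] with x hx
    calc (∫⁻ z, ENNReal.ofReal |K (z - x)| ∂(volume.restrict (Set.Icc (0:ℝ) T)))
        = ∫⁻ z, ENNReal.ofReal |K (x - z)| ∂(volume.restrict (Set.Icc (0:ℝ) T)) :=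
          lintegral_congr fun z => by rw [hzx x z]
      _ ≤ 2 * ENNReal.ofReal B := hL_slice x hx
  -- main lintegral bound
  have hbound : (∫⁻ s in Set.univ.pi (fun _ : Fin (n+2) => Set.Icc (0:ℝ) T),
      ENNReal.ofReal ‖∏ i : Fin (n+2), K (s i - s (i + 1))‖)
      ≤ ENNReal.ofReal (2 * A * T * (2 * B) ^ n) := by
    have hint_eq : ∀ s : Fin (n+2) → ℝ, ENNReal.ofReal ‖∏ i : Fin (n+2), K (s i - s (i + 1))‖
        = ∏ i : Fin (n+2), ENNReal.ofReal |K (s i - s (i + 1))| := fun s => by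
      rw [Real.norm_eq_abs, Finset.abs_prod,
        ENNReal.ofReal_prod_of_nonneg (fun i _ => abs_nonneg _)]
    simp only [hint_eq]
    rw [cycle_pi_box (n+2) T]
    -- product decomposition
    have hprod : ∀ s : Fin (n+2) → ℝ,
        (∏ i : Fin (n+2), ENNReal.ofReal |K (s i - s (i + 1))|)
        = (ENNReal.ofReal |K (s 0 - s ((0:Fin (n+1)).succ))| *
            ∏ j : Fin n, ENNReal.ofReal |K (s j.succ.castSucc - s j.succ.succ)|) *
          ENNReal.ofReal |K (s (Fin.last (n+1)) - s 0)| := fun s => by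
      rw [Fin.prod_univ_castSucc]
      simp only [Fin.coeSucc_eq_succ, Fin.last_add_one]
      rw [Fin.prod_univ_succ]
      simp only [Fin.castSucc_zero]
    have hamgm : ∀ a b : ℝ, (2:ℝ≥0∞) * (ENNReal.ofReal |K a| * ENNReal.ofReal |K b|)
        ≤ ENNReal.ofReal (K a ^ 2) + ENNReal.ofReal (K b ^ 2) := fun a b => by
      rw [← ENNReal.ofReal_mul (abs_nonneg _),
        show (2:ℝ≥0∞) = ENNReal.ofReal 2 by norm_num,
        ← ENNReal.ofReal_mul (by norm_num : (0:ℝ) ≤ 2),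
        ← ENNReal.ofReal_add (sq_nonneg _) (sq_nonneg _)]
      apply ENNReal.ofReal_le_ofReal
      calc 2 * (|K a| * |K b|) = 2 * |K a| * |K b| := by ring
        _ ≤ |K a| ^ 2 + |K b| ^ 2 := two_mul_le_add_sq _ _
        _ = K a ^ 2 + K b ^ 2 := by rw [sq_abs, sq_abs]
    have hkey : ∀ s : Fin (n+2) → ℝ,
        2 * ∏ i : Fin (n+2), ENNReal.ofReal |K (s i - s (i + 1))|
        ≤ ENNReal.ofReal (K (s (Fin.last (n+1)) - s 0) ^ 2) *
            (∏ j : Fin n, ENNReal.ofReal |K (s j.succ.castSucc - s j.succ.succ)|)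
          + ENNReal.ofReal (K (s 0 - s ((0:Fin (n+1)).succ)) ^ 2) *
            (∏ j : Fin n, ENNReal.ofReal |K (s j.succ.castSucc - s j.succ.succ)|) := fun s => by
      calc 2 * ∏ i : Fin (n+2), ENNReal.ofReal |K (s i - s (i + 1))|
          = (2 * (ENNReal.ofReal |K (s (Fin.last (n+1)) - s 0)| *
              ENNReal.ofReal |K (s 0 - s ((0:Fin (n+1)).succ))|)) *
            (∏ j : Fin n, ENNReal.ofReal |K (s j.succ.castSucc - s j.succ.succ)|) := by
            rw [hprod s]; ring
        _ ≤ (ENNReal.ofReal (K (s (Fin.last (n+1)) - s 0) ^ 2)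
              + ENNReal.ofReal (K (s 0 - s ((0:Fin (n+1)).succ)) ^ 2)) *
            (∏ j : Fin n, ENNReal.ofReal |K (s j.succ.castSucc - s j.succ.succ)|) :=
            mul_le_mul_left (hamgm _ _) _
        _ = _ := add_mul _ _ _
    have hCmeas : Measurable fun s : Fin (n+2) → ℝ =>
        ∏ j : Fin n, ENNReal.ofReal |K (s j.succ.castSucc - s j.succ.succ)| :=
      Finset.measurable_prod _ fun j _ =>
        hLmeas.comp ((measurable_pi_apply _).sub (measurable_pi_apply _))
    have hmeas1 : Measurable fun s : Fin (n+2) → ℝ =>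
        ENNReal.ofReal (K (s (Fin.last (n+1)) - s 0) ^ 2) *
          ∏ j : Fin n, ENNReal.ofReal |K (s j.succ.castSucc - s j.succ.succ)| :=
      (hQmeas.comp (Measurable.sub (measurable_pi_apply (Fin.last (n+1)))
        (measurable_pi_apply 0))).mul hCmeas
    have hmeas2 : Measurable fun s : Fin (n+2) → ℝ =>
        ENNReal.ofReal (K (s 0 - s ((0:Fin (n+1)).succ)) ^ 2) *
          ∏ j : Fin n, ENNReal.ofReal |K (s j.succ.castSucc - s j.succ.succ)| :=
      (hQmeas.comp (Measurable.sub (measurable_pi_apply 0)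
        (measurable_pi_apply ((0:Fin (n+1)).succ)))).mul hCmeas
    have hPmeas : Measurable fun s : Fin (n+2) → ℝ =>
        ∏ i : Fin (n+2), ENNReal.ofReal |K (s i - s (i + 1))| :=
      Finset.measurable_prod _ fun i _ =>
        hLmeas.comp ((measurable_pi_apply _).sub (measurable_pi_apply _))
    -- bound the two square terms
    have hI1 : (∫⁻ s, ENNReal.ofReal (K (s (Fin.last (n+1)) - s 0) ^ 2) *
          (∏ j : Fin n, ENNReal.ofReal |K (s j.succ.castSucc - s j.succ.succ)|)
          ∂(Measure.pi fun _ : Fin (n+2) => volume.restrict (Set.Icc (0:ℝ) T)))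
        ≤ ENNReal.ofReal T * ((2 * ENNReal.ofReal A) * (2 * ENNReal.ofReal B) ^ n) := by
      rw [cycle_peel_zero (volume.restrict (Set.Icc (0:ℝ) T)) _ hmeas1]
      have hrw1 : ∀ (x : ℝ) (y : Fin (n+1) → ℝ),
          ENNReal.ofReal (K ((Fin.cons x y : Fin (n+2) → ℝ) (Fin.last (n+1))
              - (Fin.cons x y : Fin (n+2) → ℝ) 0) ^ 2) *
            ∏ j : Fin n, ENNReal.ofReal |K ((Fin.cons x y : Fin (n+2) → ℝ) j.succ.castSucc
              - (Fin.cons x y : Fin (n+2) → ℝ) j.succ.succ)|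
          = (∏ j : Fin n, ENNReal.ofReal |K (y j.castSucc - y j.succ)|) *
            (fun z => ENNReal.ofReal (K (z - x) ^ 2)) (y (Fin.last n)) := by
        intro x y
        simp only [← Fin.succ_last, ← Fin.succ_castSucc, Fin.cons_succ, Fin.cons_zero]
        ring
      simp only [hrw1]
      have hchain := cycle_chain_snoc (fun t => ENNReal.ofReal |K t|) hLmeas
        (volume.restrict (Set.Icc (0:ℝ) T)) (2 * ENNReal.ofReal B) hβsnoc n
      calc (∫⁻ x, ∫⁻ y, (∏ j : Fin n, ENNReal.ofReal |K (y j.castSucc - y j.succ)|) *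
              ENNReal.ofReal (K (y (Fin.last n) - x) ^ 2)
              ∂(Measure.pi fun _ : Fin (n+1) => volume.restrict (Set.Icc (0:ℝ) T))
              ∂(volume.restrict (Set.Icc (0:ℝ) T)))
          ≤ ∫⁻ _, (2 * ENNReal.ofReal A) * (2 * ENNReal.ofReal B) ^ n
              ∂(volume.restrict (Set.Icc (0:ℝ) T)) := by
            refine lintegral_mono_ae ?_
            filter_upwards [ae_restrict_mem measurableSet_Icc] with x hx
            refine (hchain (fun z => ENNReal.ofReal (K (z - x) ^ 2))
              (hQmeas.comp (measurable_id.sub measurable_const))).trans ?_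
            refine mul_le_mul_left ?_ _
            calc (∫⁻ z, ENNReal.ofReal (K (z - x) ^ 2)
                    ∂(volume.restrict (Set.Icc (0:ℝ) T)))
                = ∫⁻ z, ENNReal.ofReal (K (x - z) ^ 2)
                    ∂(volume.restrict (Set.Icc (0:ℝ) T)) :=
                  lintegral_congr fun z => by rw [hzxQ x z]
              _ ≤ 2 * ENNReal.ofReal A := hQ_slice x hx
        _ = ENNReal.ofReal T * ((2 * ENNReal.ofReal A) * (2 * ENNReal.ofReal B) ^ n) := by
            rw [lintegral_const, Measure.restrict_apply_univ, Real.volume_Icc, sub_zero,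
              mul_comm]
    have hI2 : (∫⁻ s, ENNReal.ofReal (K (s 0 - s ((0:Fin (n+1)).succ)) ^ 2) *
          (∏ j : Fin n, ENNReal.ofReal |K (s j.succ.castSucc - s j.succ.succ)|)
          ∂(Measure.pi fun _ : Fin (n+2) => volume.restrict (Set.Icc (0:ℝ) T)))
        ≤ ENNReal.ofReal T * ((2 * ENNReal.ofReal A) * (2 * ENNReal.ofReal B) ^ n) := by
      rw [cycle_peel_zero (volume.restrict (Set.Icc (0:ℝ) T)) _ hmeas2]
      have hrw2 : ∀ (x : ℝ) (y : Fin (n+1) → ℝ),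
          ENNReal.ofReal (K ((Fin.cons x y : Fin (n+2) → ℝ) 0
              - (Fin.cons x y : Fin (n+2) → ℝ) ((0:Fin (n+1)).succ)) ^ 2) *
            ∏ j : Fin n, ENNReal.ofReal |K ((Fin.cons x y : Fin (n+2) → ℝ) j.succ.castSucc
              - (Fin.cons x y : Fin (n+2) → ℝ) j.succ.succ)|
          = (fun z => ENNReal.ofReal (K (x - z) ^ 2)) (y 0) *
            ∏ j : Fin n, ENNReal.ofReal |K (y j.castSucc - y j.succ)| := by
        intro x y
        simp only [← Fin.succ_castSucc, Fin.cons_succ, Fin.cons_zero]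
      simp only [hrw2]
      have hchain := cycle_chain_cons (fun t => ENNReal.ofReal |K t|) hLmeas
        (volume.restrict (Set.Icc (0:ℝ) T)) (2 * ENNReal.ofReal B) hβcons n
      calc (∫⁻ x, ∫⁻ y, ENNReal.ofReal (K (x - y 0) ^ 2) *
              ∏ j : Fin n, ENNReal.ofReal |K (y j.castSucc - y j.succ)|
              ∂(Measure.pi fun _ : Fin (n+1) => volume.restrict (Set.Icc (0:ℝ) T))
              ∂(volume.restrict (Set.Icc (0:ℝ) T)))
          ≤ ∫⁻ _, (2 * ENNReal.ofReal A) * (2 * ENNReal.ofReal B) ^ n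
              ∂(volume.restrict (Set.Icc (0:ℝ) T)) := by
            refine lintegral_mono_ae ?_
            filter_upwards [ae_restrict_mem measurableSet_Icc] with x hx
            refine (hchain (fun z => ENNReal.ofReal (K (x - z) ^ 2))
              (hQmeas.comp (measurable_const.sub measurable_id))).trans ?_
            exact mul_le_mul_left (hQ_slice x hx) _
        _ = ENNReal.ofReal T * ((2 * ENNReal.ofReal A) * (2 * ENNReal.ofReal B) ^ n) := by
            rw [lintegral_const, Measure.restrict_apply_univ, Real.volume_Icc, sub_zero,
              mul_comm]
    -- combine
    have htwo : 2 * (∫⁻ s, ∏ i : Fin (n+2), ENNReal.ofReal |K (s i - s (i + 1))|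
          ∂(Measure.pi fun _ : Fin (n+2) => volume.restrict (Set.Icc (0:ℝ) T)))
        ≤ 2 * (ENNReal.ofReal T * ((2 * ENNReal.ofReal A) * (2 * ENNReal.ofReal B) ^ n)) := by
      rw [← lintegral_const_mul 2 hPmeas]
      calc (∫⁻ s, 2 * ∏ i : Fin (n+2), ENNReal.ofReal |K (s i - s (i + 1))|
            ∂(Measure.pi fun _ : Fin (n+2) => volume.restrict (Set.Icc (0:ℝ) T)))
          ≤ ∫⁻ s, (ENNReal.ofReal (K (s (Fin.last (n+1)) - s 0) ^ 2) *
              (∏ j : Fin n, ENNReal.ofReal |K (s j.succ.castSucc - s j.succ.succ)|)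
            + ENNReal.ofReal (K (s 0 - s ((0:Fin (n+1)).succ)) ^ 2) *
              (∏ j : Fin n, ENNReal.ofReal |K (s j.succ.castSucc - s j.succ.succ)|))
            ∂(Measure.pi fun _ : Fin (n+2) => volume.restrict (Set.Icc (0:ℝ) T)) :=
            lintegral_mono hkey
        _ = (∫⁻ s, ENNReal.ofReal (K (s (Fin.last (n+1)) - s 0) ^ 2) *
              (∏ j : Fin n, ENNReal.ofReal |K (s j.succ.castSucc - s j.succ.succ)|)
              ∂(Measure.pi fun _ : Fin (n+2) => volume.restrict (Set.Icc (0:ℝ) T)))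
            + ∫⁻ s, ENNReal.ofReal (K (s 0 - s ((0:Fin (n+1)).succ)) ^ 2) *
              (∏ j : Fin n, ENNReal.ofReal |K (s j.succ.castSucc - s j.succ.succ)|)
              ∂(Measure.pi fun _ : Fin (n+2) => volume.restrict (Set.Icc (0:ℝ) T)) :=
            lintegral_add_left hmeas1 _
        _ ≤ 2 * (ENNReal.ofReal T * ((2 * ENNReal.ofReal A) * (2 * ENNReal.ofReal B) ^ n)) := by
            rw [two_mul]
            exact add_le_add hI1 hI2
    have hItot : (∫⁻ s, ∏ i : Fin (n+2), ENNReal.ofReal |K (s i - s (i + 1))|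
          ∂(Measure.pi fun _ : Fin (n+2) => volume.restrict (Set.Icc (0:ℝ) T)))
        ≤ ENNReal.ofReal T * ((2 * ENNReal.ofReal A) * (2 * ENNReal.ofReal B) ^ n) :=
      (ENNReal.mul_le_mul_iff_right (two_ne_zero) (by norm_num)).1 htwo
    refine hItot.trans (le_of_eq ?_)
    rw [show (2:ℝ≥0∞) = ENNReal.ofReal 2 by norm_num,
      ← ENNReal.ofReal_mul (by norm_num : (0:ℝ) ≤ 2),
      ← ENNReal.ofReal_mul (by norm_num : (0:ℝ) ≤ 2),
      ← ENNReal.ofReal_pow (by linarith : (0:ℝ) ≤ 2 * B),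
      ← ENNReal.ofReal_mul (by linarith : (0:ℝ) ≤ 2 * A),
      ← ENNReal.ofReal_mul hT.le]
    congr 1
    ring
  have h1 := MeasureTheory.norm_integral_le_lintegral_norm
    (μ := (volume : Measure (Fin (n+2) → ℝ)).restrict
      (Set.univ.pi fun _ => Set.Icc (0:ℝ) T))
    (fun s : Fin (n+2) → ℝ => ∏ i : Fin (n+2), K (s i - s (i + 1)))
  rw [Real.norm_eq_abs] at h1
  refine h1.trans ?_
  refine ENNReal.toReal_le_of_le_ofReal ?_ hbound
  have h2B : (0:ℝ) ≤ (2*B)^n := pow_nonneg (by linarith) n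
  nlinarith [mul_nonneg (mul_nonneg hA0 hT.le) h2B]
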